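/- For all Y, Z ∈ V one has Ŝ(Y,Z) = (ρ/α)·g(Y,Z) − (ρ/α)·π(Y)π(Z) + (1/α)·η(Y)η(Z). -/
import Mathlib

open scoped RealInnerProductSpace

theorem statement0 {V : Type*} [NormedAddCommGroup V] [InnerProductSpace ℝ V]
    [FiniteDimensional ℝ V] (h3 : 3 ≤ Module.finrank ℝ V)
    (S : V →ₗ[ℝ] V →ₗ[ℝ] ℝ) (hSsymm : ∀ X Y : V, S X Y = S Y X)
    (P : V) (hP : ⟪P, P⟫ = 1) (hα : S P P ≠ 0) (ρ : ℝ)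
    (hρ : ∀ X Y Z W : V,
      S Y Z * S X W - S X Z * S Y W =
        ρ * (⟪Y, Z⟫ * ⟪X, W⟫ - ⟪X, Z⟫ * ⟪Y, W⟫)) :
    ∀ Y Z : V, S Y Z =
      (ρ / S P P) * ⟪Y, Z⟫ - (ρ / S P P) * (⟪Y, P⟫ * ⟪Z, P⟫)
        + (1 / S P P) * (S P Y * S P Z) := by
  intro Y Z
  have h := hρ P Y Z P
  rw [hP, real_inner_comm Z P, hSsymm Y P] at h
  field_simp
  linarith
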